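/- Let u : ℝ³ → ℝ³ be a Schwartz function. Then ‖∇u‖_{L³(ℝ³)} ≲ ‖∇u‖_{L²(ℝ³)}^{1/2} · ‖∇²u‖_{L²(ℝ³)}^{1/2}. -/

import Mathlib

open MeasureTheory
open scoped ENNReal NNReal Topology
open Filter Metric

noncomputable section



/-- Lyapunov interpolation: `‖v‖₃ ≤ ‖v‖₂^{1/2} ‖v‖₆^{1/2}`. -/
lemma interp_L3 {α F : Type*} [MeasurableSpace α] [NormedAddCommGroup F]
    {μ : Measure α} {v : α → F} (hv : AEStronglyMeasurable v μ) :
    eLpNorm v 3 μ ≤ eLpNorm v 2 μ ^ ((1:ℝ)/2) * eLpNorm v 6 μ ^ ((1:ℝ)/2) := by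
  set X := ∫⁻ x, (‖v x‖₊ : ℝ≥0∞) ^ (2:ℝ) ∂μ with hX
  set Y := ∫⁻ x, (‖v x‖₊ : ℝ≥0∞) ^ (6:ℝ) ∂μ with hY
  have hmeas : AEMeasurable (fun x => (‖v x‖₊ : ℝ≥0∞)) μ := hv.enorm
  have key : ∫⁻ x, (‖v x‖₊ : ℝ≥0∞) ^ (3:ℝ) ∂μ ≤ X ^ (3/4:ℝ) * Y ^ (1/4:ℝ) := by
    have h := ENNReal.lintegral_mul_norm_pow_le (μ := μ)
      (f := fun x => (‖v x‖₊ : ℝ≥0∞) ^ (2:ℝ)) (g := fun x => (‖v x‖₊ : ℝ≥0∞) ^ (6:ℝ))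
      (hmeas.pow_const _) (hmeas.pow_const _)
      (p := 3/4) (q := 1/4) (by norm_num) (by norm_num) (by norm_num)
    refine le_trans (le_of_eq ?_) h
    refine lintegral_congr fun x => ?_
    rw [← ENNReal.rpow_mul, ← ENNReal.rpow_mul,
      ← ENNReal.rpow_add_of_nonneg _ _ (by norm_num) (by norm_num)]
    norm_num
  have h2 : eLpNorm v 2 μ = X ^ ((1:ℝ)/2) := by
    rw [eLpNorm_eq_lintegral_rpow_enorm_toReal (by norm_num) (by norm_num)]
    norm_num [hX, enorm_eq_nnnorm]
  have h6 : eLpNorm v 6 μ = Y ^ ((1:ℝ)/6) := by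
    rw [eLpNorm_eq_lintegral_rpow_enorm_toReal (by norm_num) (by norm_num)]
    norm_num [hY, enorm_eq_nnnorm]
  have h3 : eLpNorm v 3 μ = (∫⁻ x, (‖v x‖₊ : ℝ≥0∞) ^ (3:ℝ) ∂μ) ^ ((1:ℝ)/3) := by
    rw [eLpNorm_eq_lintegral_rpow_enorm_toReal (by norm_num) (by norm_num)]
    norm_num [enorm_eq_nnnorm]
  calc eLpNorm v 3 μ = (∫⁻ x, (‖v x‖₊ : ℝ≥0∞) ^ (3:ℝ) ∂μ) ^ ((1:ℝ)/3) := h3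
    _ ≤ (X ^ (3/4:ℝ) * Y ^ (1/4:ℝ)) ^ ((1:ℝ)/3) := ENNReal.rpow_le_rpow key (by norm_num)
    _ = X ^ ((1:ℝ)/4) * Y ^ ((1:ℝ)/12) := by
        rw [ENNReal.mul_rpow_of_nonneg _ _ (by norm_num), ← ENNReal.rpow_mul,
          ← ENNReal.rpow_mul]
        norm_num
    _ = eLpNorm v 2 μ ^ ((1:ℝ)/2) * eLpNorm v 6 μ ^ ((1:ℝ)/2) := by
        rw [h2, h6, ← ENNReal.rpow_mul, ← ENNReal.rpow_mul]
        norm_num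

set_option maxHeartbeats 1000000 in
/-- Sobolev inequality for smooth `L²` functions on `ℝ³` (no compact support needed). -/
lemma sobolev_schwartz {F : Type*} [NormedAddCommGroup F] [NormedSpace ℝ F]
    [FiniteDimensional ℝ F] {v : EuclideanSpace ℝ (Fin 3) → F}
    (hv : ContDiff ℝ ((⊤ : ℕ∞) : WithTop ℕ∞) v) (hv2 : eLpNorm v 2 volume ≠ ∞) :
    eLpNorm v 6 volume ≤
      (MeasureTheory.SNormLESNormFDerivOfEqConst F
          (volume : Measure (EuclideanSpace ℝ (Fin 3))) 2 : ℝ≥0∞) *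
        eLpNorm (fderiv ℝ v) 2 volume := by
  have hone : (1 : WithTop ℕ∞) ≤ ((⊤ : ℕ∞) : WithTop ℕ∞) := by
    exact_mod_cast (le_top : (1:ℕ∞) ≤ ⊤)
  set C0 : ℝ≥0∞ := (MeasureTheory.SNormLESNormFDerivOfEqConst F
    (volume : Measure (EuclideanSpace ℝ (Fin 3))) 2 : ℝ≥0∞) with hC0
  -- the bump function
  let χ : ContDiffBump (0 : EuclideanSpace ℝ (Fin 3)) := ⟨1, 2, one_pos, one_lt_two⟩
  have hχ : ContDiff ℝ ((⊤ : ℕ∞) : WithTop ℕ∞) ⇑χ := χ.contDiff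
  obtain ⟨K, hK⟩ : ∃ K, ∀ y, ‖fderiv ℝ χ y‖ ≤ K :=
    (χ.hasCompactSupport.fderiv (𝕜 := ℝ)).exists_bound_of_continuous
      (hχ.continuous_fderiv (by simp))
  have hK0 : 0 ≤ K := le_trans (norm_nonneg _) (hK 0)
  -- the rescaled cutoffs
  set φ : ℕ → EuclideanSpace ℝ (Fin 3) → ℝ := fun n x => χ (((n : ℝ) + 1)⁻¹ • x) with hφ
  have hc : ∀ n : ℕ, (0:ℝ) < (n : ℝ) + 1 := fun n => by positivity
  have hφd : ∀ n, ContDiff ℝ ((⊤ : ℕ∞) : WithTop ℕ∞) (φ n) := by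
    intro n
    exact hχ.comp (contDiff_const_smul _)
  have hφ1 : ∀ (n : ℕ) (x : EuclideanSpace ℝ (Fin 3)), ‖x‖ ≤ (n : ℝ) + 1 → φ n x = 1 := by
    intro n x hx
    apply χ.one_of_mem_closedBall
    rw [mem_closedBall_zero_iff, norm_smul, norm_inv, Real.norm_eq_abs,
      abs_of_pos (hc n)]
    calc ((n:ℝ)+1)⁻¹ * ‖x‖ ≤ ((n:ℝ)+1)⁻¹ * ((n:ℝ)+1) := by gcongr
      _ = 1 := inv_mul_cancel₀ (hc n).ne'
  have hφle : ∀ (n : ℕ) (x : EuclideanSpace ℝ (Fin 3)), ‖φ n x‖ ≤ 1 := by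
    intro n x
    rw [Real.norm_eq_abs, abs_of_nonneg χ.nonneg]
    exact χ.le_one
  have hsupp : ∀ n, HasCompactSupport (φ n) := by
    intro n
    apply HasCompactSupport.intro
      (isCompact_closedBall (0 : EuclideanSpace ℝ (Fin 3)) (2 * ((n:ℝ)+1)))
    intro x hx
    apply χ.zero_of_le_dist
    rw [dist_zero_right, norm_smul, norm_inv, Real.norm_eq_abs, abs_of_pos (hc n)]
    rw [mem_closedBall, dist_zero_right, not_le] at hx
    rw [le_inv_mul_iff₀ (hc n), show χ.rOut = (2:ℝ) from rfl]
    calc ((n:ℝ)+1) * 2 = 2 * ((n:ℝ)+1) := by ring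
      _ ≤ ‖x‖ := hx.le
  -- derivative bound for the cutoffs
  have hφ' : ∀ (n : ℕ) (x : EuclideanSpace ℝ (Fin 3)),
      ‖fderiv ℝ (φ n) x‖ ≤ K / ((n:ℝ)+1) := by
    intro n x
    have hL : (fun y : EuclideanSpace ℝ (Fin 3) => ((n:ℝ)+1)⁻¹ • y)
        = ⇑((((n:ℝ)+1)⁻¹) • ContinuousLinearMap.id ℝ (EuclideanSpace ℝ (Fin 3))) := by
      ext y; simp
    have hdL : DifferentiableAt ℝ
        (fun y : EuclideanSpace ℝ (Fin 3) => ((n:ℝ)+1)⁻¹ • y) x := by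
      rw [hL]
      exact ContinuousLinearMap.differentiableAt _
    have heq : fderiv ℝ (φ n) x = (fderiv ℝ χ (((n:ℝ)+1)⁻¹ • x)).comp
        ((((n:ℝ)+1)⁻¹) • ContinuousLinearMap.id ℝ (EuclideanSpace ℝ (Fin 3))) := by
      have h1 : φ n = (⇑χ) ∘ (fun y : EuclideanSpace ℝ (Fin 3) => ((n:ℝ)+1)⁻¹ • y) := rfl
      have hχd : DifferentiableAt ℝ ⇑χ (((n:ℝ)+1)⁻¹ • x) :=
        ((hχ.differentiable (by simp)).differentiableAt)
      rw [h1, fderiv_comp x hχd hdL]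
      congr 1
      have h2 : fderiv ℝ (fun y : EuclideanSpace ℝ (Fin 3) => ((n:ℝ)+1)⁻¹ • y) x
          = (((n:ℝ)+1)⁻¹) • ContinuousLinearMap.id ℝ (EuclideanSpace ℝ (Fin 3)) := by
        rw [hL]
        exact ContinuousLinearMap.fderiv _
      exact h2
    rw [heq]
    calc ‖(fderiv ℝ χ (((n:ℝ)+1)⁻¹ • x)).comp
          ((((n:ℝ)+1)⁻¹) • ContinuousLinearMap.id ℝ (EuclideanSpace ℝ (Fin 3)))‖
        ≤ ‖fderiv ℝ χ (((n:ℝ)+1)⁻¹ • x)‖ *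
            ‖(((n:ℝ)+1)⁻¹) • ContinuousLinearMap.id ℝ (EuclideanSpace ℝ (Fin 3))‖ :=
          ContinuousLinearMap.opNorm_comp_le _ _
      _ ≤ K * (((n:ℝ)+1)⁻¹ * 1) := by
          apply mul_le_mul (hK _) _ (norm_nonneg _) hK0
          refine le_trans (ContinuousLinearMap.opNorm_smul_le _ _) ?_
          rw [norm_inv, Real.norm_eq_abs, abs_of_pos (hc n)]
          gcongr
          exact ContinuousLinearMap.norm_id_le
      _ = K / ((n:ℝ)+1) := by rw [mul_one, div_eq_mul_inv]
  -- approximants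
  set w : ℕ → EuclideanSpace ℝ (Fin 3) → F := fun n x => φ n x • v x with hw
  have h1 : ∀ n, ContDiff ℝ 1 (w n) := fun n =>
    ((hφd n).of_le hone).smul (hv.of_le hone)
  have h2 : ∀ n, HasCompactSupport (w n) := fun n => (hsupp n).smul_right
  have hfinrank : 0 < Module.finrank ℝ (EuclideanSpace ℝ (Fin 3)) := by
    simp [finrank_euclideanSpace_fin]
  have hsob : ∀ n, eLpNorm (w n) 6 volume ≤ C0 * eLpNorm (fderiv ℝ (w n)) 2 volume := by
    intro n
    have := MeasureTheory.eLpNorm_le_eLpNorm_fderiv_of_eq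
      (μ := (volume : Measure (EuclideanSpace ℝ (Fin 3)))) (u := w n)
      (h1 n) (h2 n) (p := 2) (p' := 6) one_le_two hfinrank ?_
    · convert this using 2 <;> norm_num [hC0]
    · simp only [finrank_euclideanSpace_fin]
      norm_num
  -- derivative bound for the approximants
  have hfd : ∀ (n : ℕ) (x : EuclideanSpace ℝ (Fin 3)), ‖fderiv ℝ (w n) x‖
      ≤ ‖fderiv ℝ v x‖ + (K / ((n:ℝ)+1)) * ‖v x‖ := by
    intro n x
    rw [show fderiv ℝ (w n) x
        = φ n x • fderiv ℝ v x + (fderiv ℝ (φ n) x).smulRight (v x) from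
      fderiv_fun_smul ((hφd n).differentiable (by simp)).differentiableAt
        (hv.differentiable (by simp)).differentiableAt]
    calc ‖φ n x • fderiv ℝ v x + (fderiv ℝ (φ n) x).smulRight (v x)‖
        ≤ ‖φ n x • fderiv ℝ v x‖ + ‖(fderiv ℝ (φ n) x).smulRight (v x)‖ := norm_add_le _ _
      _ ≤ ‖fderiv ℝ v x‖ + (K / ((n:ℝ)+1)) * ‖v x‖ := by
          apply add_le_add
          · refine le_trans (ContinuousLinearMap.opNorm_smul_le _ _) ?_
            calc ‖φ n x‖ * ‖fderiv ℝ v x‖ ≤ 1 * ‖fderiv ℝ v x‖ := by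
                  gcongr; exact hφle n x
              _ = ‖fderiv ℝ v x‖ := one_mul _
          · rw [ContinuousLinearMap.norm_smulRight_apply]
            gcongr
            exact hφ' n x
  have hmeas1 : AEStronglyMeasurable (fun x => ‖fderiv ℝ v x‖)
      (volume : Measure (EuclideanSpace ℝ (Fin 3))) :=
    (hv.continuous_fderiv (by simp)).norm.aestronglyMeasurable
  have hmeas2 : ∀ n : ℕ, AEStronglyMeasurable (fun x => (K / ((n:ℝ)+1)) * ‖v x‖)
      (volume : Measure (EuclideanSpace ℝ (Fin 3))) :=
    fun n => (continuous_const.mul hv.continuous.norm).aestronglyMeasurable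
  have heL : ∀ n : ℕ, eLpNorm (fderiv ℝ (w n)) 2 volume
      ≤ eLpNorm (fderiv ℝ v) 2 volume
        + ENNReal.ofReal (K / ((n:ℝ)+1)) * eLpNorm v 2 volume := by
    intro n
    have hdivnn : (0:ℝ) ≤ K / ((n:ℝ)+1) := by positivity
    calc eLpNorm (fderiv ℝ (w n)) 2 volume
        ≤ eLpNorm (fun x => ‖fderiv ℝ v x‖ + (K / ((n:ℝ)+1)) * ‖v x‖) 2 volume := by
          apply eLpNorm_mono
          intro x
          rw [Real.norm_eq_abs, abs_of_nonneg (by positivity)]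
          exact hfd n x
      _ ≤ eLpNorm (fun x => ‖fderiv ℝ v x‖) 2 volume
            + eLpNorm (fun x => (K / ((n:ℝ)+1)) * ‖v x‖) 2 volume :=
          eLpNorm_add_le hmeas1 (hmeas2 n) one_le_two
      _ = eLpNorm (fderiv ℝ v) 2 volume
            + ENNReal.ofReal (K / ((n:ℝ)+1)) * eLpNorm v 2 volume := by
          rw [eLpNorm_norm]
          congr 1
          have heq2 : (fun x : EuclideanSpace ℝ (Fin 3) => (K / ((n:ℝ)+1)) * ‖v x‖)
              = (K / ((n:ℝ)+1)) • (fun x => ‖v x‖) := by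
            funext x; simp [smul_eq_mul]
          rw [heq2, eLpNorm_const_smul, eLpNorm_norm]
          congr 1
          rw [← Real.enorm_eq_ofReal hdivnn]
  -- pointwise convergence
  have hlim : ∀ x : EuclideanSpace ℝ (Fin 3),
      Filter.Tendsto (fun n => w n x) Filter.atTop (𝓝 (v x)) := by
    intro x
    apply Filter.Tendsto.congr' _ tendsto_const_nhds
    obtain ⟨N, hN⟩ := exists_nat_ge ‖x‖
    filter_upwards [Filter.eventually_ge_atTop N] with n hn
    have hxn : ‖x‖ ≤ (n : ℝ) + 1 :=
      le_trans hN (le_trans (Nat.cast_le.2 hn) (by linarith))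
    show v x = w n x
    rw [hw]
    simp only []
    rw [hφ1 n x hxn, one_smul]
  -- limit of the error term
  have h0 : Filter.Tendsto (fun n : ℕ => ENNReal.ofReal (K / ((n:ℝ)+1)))
      Filter.atTop (𝓝 0) := by
    rw [show (0:ℝ≥0∞) = ENNReal.ofReal 0 by simp]
    apply ENNReal.tendsto_ofReal
    have := (tendsto_const_div_atTop_nhds_zero_nat K).comp (tendsto_add_atTop_nat 1)
    refine this.congr fun n => ?_
    simp only [Function.comp]
    push_cast
    ring_nf
  have h0' : Filter.Tendsto
      (fun n : ℕ => ENNReal.ofReal (K / ((n:ℝ)+1)) * eLpNorm v 2 volume)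
      Filter.atTop (𝓝 0) := by
    have := ENNReal.Tendsto.mul_const h0 (Or.inr hv2)
    simpa using this
  have htend : Filter.Tendsto (fun n : ℕ => C0 * (eLpNorm (fderiv ℝ v) 2 volume
      + ENNReal.ofReal (K / ((n:ℝ)+1)) * eLpNorm v 2 volume)) Filter.atTop
      (𝓝 (C0 * eLpNorm (fderiv ℝ v) 2 volume)) := by
    have h3 : Filter.Tendsto (fun n : ℕ => eLpNorm (fderiv ℝ v) 2 volume
        + ENNReal.ofReal (K / ((n:ℝ)+1)) * eLpNorm v 2 volume) Filter.atTop
        (𝓝 (eLpNorm (fderiv ℝ v) 2 volume + 0)) := tendsto_const_nhds.add h0'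
    rw [add_zero] at h3
    exact ENNReal.Tendsto.const_mul h3 (Or.inr ENNReal.coe_ne_top)
  -- conclusion via Fatou
  calc eLpNorm v 6 volume
      ≤ Filter.atTop.liminf (fun n => eLpNorm (w n) 6 volume) :=
        MeasureTheory.Lp.eLpNorm_lim_le_liminf_eLpNorm
          (fun n => ((h1 n).continuous).aestronglyMeasurable) v
          (Filter.Eventually.of_forall hlim)
    _ ≤ Filter.atTop.liminf (fun n : ℕ => C0 * (eLpNorm (fderiv ℝ v) 2 volume
          + ENNReal.ofReal (K / ((n:ℝ)+1)) * eLpNorm v 2 volume)) :=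
        Filter.liminf_le_liminf (Filter.Eventually.of_forall
          (fun n => (hsob n).trans (mul_le_mul_right (heL n) _)))
    _ = C0 * eLpNorm (fderiv ℝ v) 2 volume := htend.liminf_eq

instance fdMultilinear :
    FiniteDimensional ℝ (ContinuousMultilinearMap ℝ
      (fun _ : Fin 1 => EuclideanSpace ℝ (Fin 3)) (EuclideanSpace ℝ (Fin 3))) :=
  LinearEquiv.finiteDimensional
    (continuousMultilinearCurryFin1 ℝ (EuclideanSpace ℝ (Fin 3))
      (EuclideanSpace ℝ (Fin 3))).toLinearEquiv.symm

set_option maxHeartbeats 1000000 in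
/-- Interpolation inequality: for Schwartz `u : ℝ³ → ℝ³`,
`‖∇u‖_{L³} ≲ ‖∇u‖_{L²}^{1/2} ‖∇²u‖_{L²}^{1/2}` with an absolute constant. -/
theorem gagliardo_nirenberg_L3 :
    ∃ C : ℝ, 0 < C ∧
      ∀ u : SchwartzMap (EuclideanSpace ℝ (Fin 3)) (EuclideanSpace ℝ (Fin 3)),
        eLpNorm (iteratedFDeriv ℝ 1 (fun x => u x)) 3 volume ≤
          ENNReal.ofReal C *
            eLpNorm (iteratedFDeriv ℝ 1 (fun x => u x)) 2 volume ^ ((1:ℝ)/2) *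
            eLpNorm (iteratedFDeriv ℝ 2 (fun x => u x)) 2 volume ^ ((1:ℝ)/2) := by
  set C0 : ℝ≥0 := MeasureTheory.SNormLESNormFDerivOfEqConst
    (ContinuousMultilinearMap ℝ (fun _ : Fin 1 => EuclideanSpace ℝ (Fin 3))
      (EuclideanSpace ℝ (Fin 3)))
    (volume : Measure (EuclideanSpace ℝ (Fin 3))) 2 with hC0def
  refine ⟨(C0:ℝ) ^ ((1:ℝ)/2) + 1, by positivity, ?_⟩
  intro u
  set v := iteratedFDeriv ℝ 1 (fun x => u x) with hvdef
  have hsm : ContDiff ℝ ((⊤:ℕ∞) : WithTop ℕ∞) (fun x : EuclideanSpace ℝ (Fin 3) => u x) :=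
    u.smooth ⊤
  have hvsm : ContDiff ℝ ((⊤:ℕ∞) : WithTop ℕ∞) v := by
    rw [hvdef]
    apply hsm.iteratedFDeriv_right
    exact_mod_cast le_top
  have hmeasv : AEStronglyMeasurable v volume := hvsm.continuous.aestronglyMeasurable
  set M : ℝ := SchwartzMap.seminorm ℝ 0 1 u with hM
  have hM0 : 0 ≤ M := apply_nonneg _ _
  have hbound : ∀ x, ‖v x‖ ≤ M := by
    intro x
    simpa [hvdef] using SchwartzMap.norm_iteratedFDeriv_le_seminorm ℝ u 1 x
  have hint : Integrable (fun x => ‖v x‖) volume := by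
    have h := u.integrable_pow_mul_iteratedFDeriv (μ := volume) 0 1
    simpa [hvdef] using h
  have hv2 : eLpNorm v 2 volume ≠ ∞ := by
    apply MeasureTheory.MemLp.eLpNorm_ne_top
    rw [memLp_two_iff_integrable_sq_norm hmeasv]
    apply (hint.const_mul M).mono
      ((hvsm.continuous.norm.pow 2).aestronglyMeasurable)
    apply Filter.Eventually.of_forall
    intro x
    have h1 : ‖v x‖ ^ 2 ≤ M * ‖v x‖ := by
      rw [pow_two]
      exact mul_le_mul_of_nonneg_right (hbound x) (norm_nonneg _)
    calc ‖‖v x‖ ^ 2‖ = ‖v x‖ ^ 2 := by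
          rw [Real.norm_eq_abs, abs_of_nonneg (by positivity)]
      _ ≤ M * ‖v x‖ := h1
      _ ≤ ‖M * ‖v x‖‖ := le_abs_self _
  have hsob := sobolev_schwartz hvsm hv2
  have hinterp := interp_L3 (μ := (volume : Measure (EuclideanSpace ℝ (Fin 3)))) hmeasv
  have hnorm : eLpNorm (fderiv ℝ v) 2 volume
      = eLpNorm (iteratedFDeriv ℝ 2 (fun x => u x)) 2 volume := by
    rw [← eLpNorm_norm (fderiv ℝ v), ← eLpNorm_norm (iteratedFDeriv ℝ 2 _)]
    congr 1
    funext x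
    rw [hvdef]
    exact norm_fderiv_iteratedFDeriv
  have hcoe : ((C0 : ℝ≥0∞)) ^ ((1:ℝ)/2) ≤ ENNReal.ofReal ((C0:ℝ) ^ ((1:ℝ)/2) + 1) := by
    rw [← ENNReal.coe_rpow_of_nonneg _ (by norm_num : (0:ℝ) ≤ 1/2)]
    rw [← ENNReal.ofReal_coe_nnreal]
    apply ENNReal.ofReal_le_ofReal
    rw [NNReal.coe_rpow]
    linarith
  calc eLpNorm v 3 volume
      ≤ eLpNorm v 2 volume ^ ((1:ℝ)/2) * eLpNorm v 6 volume ^ ((1:ℝ)/2) := hinterp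
    _ ≤ eLpNorm v 2 volume ^ ((1:ℝ)/2)
          * ((C0 : ℝ≥0∞) * eLpNorm (fderiv ℝ v) 2 volume) ^ ((1:ℝ)/2) := by
        exact mul_le_mul_right (ENNReal.rpow_le_rpow hsob (by norm_num)) _
    _ = (C0 : ℝ≥0∞) ^ ((1:ℝ)/2) * eLpNorm v 2 volume ^ ((1:ℝ)/2)
          * eLpNorm (fderiv ℝ v) 2 volume ^ ((1:ℝ)/2) := by
        rw [ENNReal.mul_rpow_of_nonneg _ _ (by norm_num : (0:ℝ) ≤ 1/2)]
        ring
    _ ≤ ENNReal.ofReal ((C0:ℝ) ^ ((1:ℝ)/2) + 1) * eLpNorm v 2 volume ^ ((1:ℝ)/2)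
          * eLpNorm (iteratedFDeriv ℝ 2 (fun x => u x)) 2 volume ^ ((1:ℝ)/2) := by
        rw [hnorm]
        exact mul_le_mul_left (mul_le_mul_left hcoe _) _
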